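/- Define the involutions cx₁₂ (x, y) = (x, xor y x) and cx₂₁ (x, y) = (xor x y, y) of Bool × Bool, and the state v ∈ EuclideanSpace ℂ (Bool × Bool) by v (x, y) = if y = false then 1/√2 else 0 (the state |+⟩⊗|0⟩). Then the state w = v ∘ cx₁₂ ∘ cx₂₁ obtained by applying first cx₁₂ then cx₂₁ satisfies w (x, y) = if x = false then 1/√2 else 0, hence ‖w‖ = 1, and the drop of its second register, (D w) x = w (x, false) + w (x, true), has ‖D w‖² = 2. In particular no norm-nonincreasing linear map can perform the uncomputation of the second qubit of the output of this two-CNOT circuit. -/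

import Mathlib

/-- CNOT with control on the first qubit and target on the second. -/
def cx12 : Bool × Bool → Bool × Bool := fun p => (p.1, xor p.2 p.1)

/-- CNOT with control on the second qubit and target on the first. -/
def cx21 : Bool × Bool → Bool × Bool := fun p => (xor p.1 p.2, p.2)

/-- The state `|+⟩ ⊗ |0⟩`. -/
noncomputable def v : EuclideanSpace ℂ (Bool × Bool) :=
  WithLp.toLp 2 (fun p => if p.2 = false then (1 / (Real.sqrt 2 : ℂ)) else 0)

/-- The result of applying first `cx12` and then `cx21` to `v`. -/
noncomputable def w : EuclideanSpace ℂ (Bool × Bool) := WithLp.toLp 2 (v ∘ cx12 ∘ cx21)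

/-- The drop (deallocation) of the second register. -/
noncomputable def dropW : EuclideanSpace ℂ Bool :=
  WithLp.toLp 2 (fun x => w (x, false) + w (x, true))


lemma hw : ∀ x y : Bool, w (x, y) = if x = false then (1 / (Real.sqrt 2 : ℂ)) else 0 := by
  intro x y
  cases x <;> cases y <;> simp [w, v, cx12, cx21]

lemma sqrt2_ne : (Real.sqrt 2 : ℂ) ≠ 0 := by
  simp only [ne_eq, Complex.ofReal_eq_zero]
  positivity

lemma norm_inv_sqrt2 : ‖(1 / (Real.sqrt 2 : ℂ))‖ = 1 / Real.sqrt 2 := by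
  rw [norm_div, norm_one, Complex.norm_real, Real.norm_eq_abs,
    abs_of_nonneg (Real.sqrt_nonneg 2)]

lemma norm_w : ‖w‖ = 1 := by
  rw [EuclideanSpace.norm_eq]
  have : ∑ i : Bool × Bool, ‖w i‖ ^ 2 = 1 := by
    rw [Fintype.sum_prod_type]
    simp only [Fintype.sum_bool, hw]
    simp [norm_inv_sqrt2]
    norm_num
  rw [this, Real.sqrt_one]

lemma dropW_eq : ∀ x, dropW x = if x = false then (2 / (Real.sqrt 2 : ℂ)) else 0 := by
  intro x
  simp only [dropW, hw]
  cases x <;> (simp; try ring)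

lemma norm_dropW_sq : ‖dropW‖ ^ 2 = 2 := by
  rw [EuclideanSpace.norm_eq, Real.sq_sqrt (by positivity)]
  simp only [Fintype.sum_bool, dropW_eq]
  simp
  rw [abs_of_nonneg (Real.sqrt_nonneg 2), div_pow,
    Real.sq_sqrt (by norm_num : (0:ℝ) ≤ 2)]
  norm_num

theorem two_cnot_output_not_uncomputable :
    (∀ x y : Bool, w (x, y) = if x = false then (1 / (Real.sqrt 2 : ℂ)) else 0) ∧
    ‖w‖ = 1 ∧
    ‖dropW‖ ^ 2 = 2 ∧
    ¬ ∃ T : EuclideanSpace ℂ (Bool × Bool) →ₗ[ℂ] EuclideanSpace ℂ Bool,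
        (∀ χ, ‖T χ‖ ≤ ‖χ‖) ∧ T w = dropW := by
  refine ⟨hw, norm_w, norm_dropW_sq, ?_⟩
  rintro ⟨T, hT, hTw⟩
  have h1 : ‖dropW‖ ≤ 1 := by rw [← hTw, ← norm_w]; exact hT w
  have h2 : ‖dropW‖ ^ 2 ≤ 1 := by nlinarith [norm_nonneg dropW]
  rw [norm_dropW_sq] at h2
  norm_num at h2
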